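/- arXiv:1309.5807 — 3 statements merged into one kernel-verified Lean document; each statement's English description precedes it below -/
import Mathlib

section
/- For the Lorenz system with b = 2a, if (x,y,z) : ℝ → ℝ is a solution, then the function t ↦ z(t) - x(t)²/b satisfies the linear ODE u' = -b u, hence z(t) - x(t)²/b = (z(0) - x(0)²/b)·exp(-b t) for all t. -/
theorem lorenz_invariant_ode (a b r : ℝ) (ha : 0 < a) (hb : b = 2 * a)
    (x y z : ℝ → ℝ)
    (hx : ∀ t, HasDerivAt x (-a * x t + a * y t) t)
    (hy : ∀ t, HasDerivAt y (r * x t - y t - x t * z t) t)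
    (hz : ∀ t, HasDerivAt z (-b * z t + x t * y t) t) :
    (∀ t, HasDerivAt (fun s => z s - x s ^ 2 / b)
        (-b * (z t - x t ^ 2 / b)) t) ∧
    (∀ t, z t - x t ^ 2 / b = (z 0 - x 0 ^ 2 / b) * Real.exp (-b * t)) := by
  have hb0 : b ≠ 0 := by rw [hb]; positivity
  have hu : ∀ t, HasDerivAt (fun s => z s - x s ^ 2 / b)
      (-b * (z t - x t ^ 2 / b)) t := by
    intro t
    have h := ((hz t).sub (((hx t).pow 2).div_const b))
    refine h.congr_deriv ?_
    field_simp [hb]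
    rw [hb]
    ring
  refine ⟨hu, ?_⟩
  set u : ℝ → ℝ := fun s => z s - x s ^ 2 / b with hudef
  have hg : ∀ t, HasDerivAt (fun s => u s * Real.exp (b * s)) 0 t := by
    intro t
    have he : HasDerivAt (fun s : ℝ => Real.exp (b * s)) (b * Real.exp (b * t)) t := by
      have := (Real.hasDerivAt_exp (b * t)).comp t ((hasDerivAt_id t).const_mul b)
      exact this.congr_deriv (by simp [mul_comm])
    have := (hu t).mul he
    refine this.congr_deriv ?_
    simp only [hudef]
    ring
  have hconst : ∀ t, u t * Real.exp (b * t) = u 0 * Real.exp (b * 0) := by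
    intro t
    have : ∀ s, deriv (fun s => u s * Real.exp (b * s)) s = 0 := fun s => (hg s).deriv
    have hd : Differentiable ℝ (fun s => u s * Real.exp (b * s)) :=
      fun s => (hg s).differentiableAt
    exact (is_const_of_deriv_eq_zero hd this) t 0
  intro t
  have h := hconst t
  have hexp : Real.exp (b * t) ≠ 0 := Real.exp_ne_zero _
  have : u t = u 0 * Real.exp (b * 0) / Real.exp (b * t) := by
    field_simp at h ⊢
    linarith [h]
  rw [show (-b * t) = -(b*t) by ring, Real.exp_neg]
  simp only [mul_zero, Real.exp_zero, mul_one] at this ⊢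
  show u t = u 0 * (Real.exp (b*t))⁻¹
  rw [this]; rw [div_eq_mul_inv]
end

section
/- For the Lorenz system with b = 2a, if (x,y,z) is a solution with initial condition z(0) = x(0)²/b, then z(t) = x(t)²/b for all t. -/
theorem lorenz_invariant_manifold (a b r : ℝ) (ha : 0 < a) (hb : b = 2 * a)
    (x y z : ℝ → ℝ)
    (hx : ∀ t, HasDerivAt x (-a * x t + a * y t) t)
    (hy : ∀ t, HasDerivAt y (r * x t - y t - x t * z t) t)
    (hz : ∀ t, HasDerivAt z (-b * z t + x t * y t) t)
    (h0 : z 0 = x 0 ^ 2 / b) :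
    ∀ t, z t = x t ^ 2 / b := by
  have hb0 : b ≠ 0 := by rw [hb]; positivity
  set g : ℝ → ℝ := fun t => (z t - x t ^ 2 / b) * Real.exp (b * t) with hg_def
  have hg : ∀ t, HasDerivAt g 0 t := by
    intro t
    have h1 : HasDerivAt (fun t => z t - x t ^ 2 / b)
        ((-b * z t + x t * y t) - (2 * x t ^ 1 * (-a * x t + a * y t)) / b) t :=
      (hz t).sub (((hx t).pow 2).div_const b)
    have h2 : HasDerivAt (fun t => Real.exp (b * t)) (Real.exp (b * t) * b) t := by
      simpa [mul_comm] using (((hasDerivAt_id t).const_mul b).exp)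
    have h3 := h1.mul h2
    refine HasDerivAt.congr_deriv h3 ?_
    rw [hb]
    field_simp
    ring
  have hconst : ∀ t, g t = g 0 := fun t =>
    is_const_of_deriv_eq_zero (fun s => (hg s).differentiableAt)
      (fun s => (hg s).deriv) t 0
  intro t
  have h := hconst t
  rw [hg_def] at h
  simp only [h0, sub_self, zero_mul] at h
  have hexp : Real.exp (b * t) ≠ 0 := Real.exp_ne_zero _
  have := mul_eq_zero.mp h
  rcases this with h' | h'
  · linarith [sub_eq_zero.mp h']
  · exact absurd h' hexp
end

section
/- Suppose (x,y,z) solves the Lorenz system with b = 2a, a ≠ 0, and z = x²/b identically. Then x is twice differentiable and satisfies the second-order equation x'' + (a+1) x' + a(1-r) x = -x³/2. -/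
theorem lorenz_second_order_reduction (a b r : ℝ) (ha : a ≠ 0) (hb : b = 2 * a)
    (x y z : ℝ → ℝ)
    (hx : ∀ t, HasDerivAt x (-a * x t + a * y t) t)
    (hy : ∀ t, HasDerivAt y (r * x t - y t - x t * z t) t)
    (hz : ∀ t, HasDerivAt z (-b * z t + x t * y t) t)
    (hinv : ∀ t, z t = x t ^ 2 / (2 * a)) :
    ∀ t, HasDerivAt (fun s => -a * x s + a * y s)
      (-(a + 1) * (-a * x t + a * y t) - a * (1 - r) * x t - x t ^ 3 / 2) t := by
  intro t
  have h := ((hx t).const_mul (-a)).add ((hy t).const_mul a)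
  refine h.congr_deriv ?_
  rw [hinv t]
  field_simp
  ring
end
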